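/- If ε_1, ..., ε_n are independent standard Gumbel random variables and v_1, ..., v_n ∈ R, then max_j (v_j + ε_j) is distributed as Gumbel with location ln(Σ_j exp(v_j)); that is, P(max_j (v_j + ε_j) ≤ t) = exp(-exp(-(t - ln Σ_j exp(v_j)))). -/

import Mathlib

open MeasureTheory ProbabilityTheory

/-- Max-stability of the Gumbel distribution: if `ε_1, …, ε_n` are independent standard
Gumbel random variables and `v_j ∈ ℝ`, then `max_j (v_j + ε_j)` is Gumbel with location
`ln Σ_j exp(v_j)`:  `P(max_j (v_j + ε_j) ≤ t) = exp(-exp(-(t - ln Σ_j exp(v_j))))`. -/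
theorem gumbel_max_stability
    {Ω : Type*} [MeasurableSpace Ω] (μ : Measure Ω) [IsProbabilityMeasure μ]
    {n : ℕ} [NeZero n]
    (v : Fin n → ℝ) (ε : Fin n → Ω → ℝ)
    (hmeas : ∀ j, Measurable (ε j))
    (hindep : iIndepFun ε μ)
    (hgumbel : ∀ j, ∀ t : ℝ,
      μ {ω | ε j ω ≤ t} = ENNReal.ofReal (Real.exp (-Real.exp (-t))))
    (t : ℝ) :
    μ {ω | Finset.univ.sup' Finset.univ_nonempty (fun j => v j + ε j ω) ≤ t} =
      ENNReal.ofReal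
        (Real.exp (-Real.exp (-(t - Real.log (∑ j, Real.exp (v j)))))) := by
  have hset : {ω | Finset.univ.sup' Finset.univ_nonempty (fun j => v j + ε j ω) ≤ t}
      = ⋂ j, (ε j) ⁻¹' Set.Iic (t - v j) := by
    ext ω
    simp [Finset.sup'_le_iff, Set.mem_iInter]
    constructor
    · intro h j; linarith [h j]
    · intro h j; linarith [h j]
  rw [hset, hindep.meas_iInter (fun j => ⟨Set.Iic (t - v j), measurableSet_Iic, rfl⟩)]
  have hval : ∀ j, μ ((ε j) ⁻¹' Set.Iic (t - v j))
      = ENNReal.ofReal (Real.exp (-Real.exp (-(t - v j)))) := by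
    intro j
    have := hgumbel j (t - v j)
    exact this
  simp_rw [hval]
  rw [← ENNReal.ofReal_prod_of_nonneg (fun j _ => (Real.exp_pos _).le)]
  congr 1
  rw [← Real.exp_sum]
  congr 1
  have hS : (0:ℝ) < ∑ j, Real.exp (v j) :=
    Finset.sum_pos (fun j _ => Real.exp_pos _) Finset.univ_nonempty
  rw [neg_sub, Real.exp_sub, Real.exp_log hS]
  simp_rw [neg_sub, Real.exp_sub]
  rw [Finset.sum_neg_distrib, Finset.sum_div]
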